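/- Let x > 1, y > 0 and t ∈ [0,1] be real, and set u = x + i t y. Then Im( 1/(u² · √(1 − 1/u)) ) ≤ 0, where √ denotes the principal branch of the complex square root. -/

import Mathlib

open Complex

private lemma key_ineq (X Y a b N : ℝ) (hX : 1 < X) (hY : 0 ≤ Y) (ha : 0 < a)
    (hb : 0 ≤ b) (hN : N = X ^ 2 + Y ^ 2) (h1 : N * (a ^ 2 - b ^ 2) = N - X)
    (h2 : 2 * a * b * N = Y) : 0 ≤ (X ^ 2 - Y ^ 2) * b + 2 * X * Y * a := by
  have hX0 : (0:ℝ) < X := by linarith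
  have hN0 : 0 < N := by nlinarith
  have hF : 2*a*N * ((X^2-Y^2)*b + 2*X*Y*a)
      = Y*(4*X^3-3*X^2+Y^2*(4*X-1)) + 4*X*Y*N*b^2 := by
    linear_combination (X^2-Y^2)*h2 + 4*X*Y*h1 + 4*X*Y*hN
  have hR : 0 ≤ Y*(4*X^3-3*X^2+Y^2*(4*X-1)) + 4*X*Y*N*b^2 := by
    have : 0 ≤ 4*X^3-3*X^2+Y^2*(4*X-1) := by nlinarith [sq_nonneg Y]
    have h4 : 0 ≤ 4*X*Y*N*b^2 := by positivity
    nlinarith [mul_nonneg hY this]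
  nlinarith [mul_pos ha hN0, hF, hR]

/-- For `x > 1`, `y > 0`, `t ∈ [0,1]` and `u = x + ity`,
`Im(1/(u²·√(1 - 1/u))) ≤ 0` (principal complex square root). -/
theorem stmt_9 (x y t : ℝ) (hx : 1 < x) (hy : 0 < y) (ht : t ∈ Set.Icc (0 : ℝ) 1) :
    (1 / (((x : ℂ) + (t : ℂ) * (y : ℂ) * Complex.I) ^ 2 *
        ((1 - 1 / ((x : ℂ) + (t : ℂ) * (y : ℂ) * Complex.I)) ^ (1/2 : ℂ)))).im ≤ 0 := by
  obtain ⟨ht0, ht1⟩ := ht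
  set u : ℂ := (x : ℂ) + (t : ℂ) * (y : ℂ) * Complex.I with hu
  have hure : u.re = x := by simp [hu]
  have huim : u.im = t * y := by simp [hu]
  have hY : 0 ≤ t * y := mul_nonneg ht0 hy.le
  have hu0 : u ≠ 0 := by
    intro h
    rw [Complex.ext_iff] at h
    simp [hure, huim] at h
    linarith [h.1]
  have hNsq : Complex.normSq u = x ^ 2 + (t * y) ^ 2 := by
    simp [Complex.normSq_apply, hure, huim]; ring
  have hN0 : 0 < Complex.normSq u := by rw [hNsq]; positivity
  set N : ℝ := Complex.normSq u with hNdef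
  set w : ℂ := 1 - 1 / u with hw
  have hwre : w.re = 1 - x / N := by
    simp [hw, Complex.div_re, hure, huim, ← hNdef]
  have hwim : w.im = t * y / N := by
    simp [hw, Complex.div_im, hure, huim, ← hNdef]
    ring
  have hwre_pos : 0 < w.re := by
    rw [hwre]
    have : x / N < 1 := by
      rw [div_lt_one hN0, hNsq]; nlinarith
    linarith
  have hwim_nonneg : 0 ≤ w.im := by
    rw [hwim]; positivity
  have hw0 : w ≠ 0 := by
    intro h; rw [h] at hwre_pos; simp at hwre_pos
  have harg0 : 0 ≤ w.arg := Complex.arg_nonneg_iff.mpr hwim_nonneg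
  have hargle : w.arg ≤ Real.pi / 2 :=
    Complex.arg_le_pi_div_two_iff.mpr (Or.inl hwre_pos.le)
  set s : ℂ := w ^ (1/2 : ℂ) with hs
  have hs_def : s = Complex.exp (Complex.log w * (1/2 : ℂ)) := by
    rw [hs, Complex.cpow_def_of_ne_zero hw0]
  have hmul_re : (Complex.log w * (1/2 : ℂ)).re = Real.log ‖w‖ / 2 := by
    simp [Complex.mul_re, Complex.log_re]; ring
  have hmul_im : (Complex.log w * (1/2 : ℂ)).im = w.arg / 2 := by
    simp [Complex.mul_im, Complex.log_im]; ring
  have hsre : s.re = Real.exp (Real.log ‖w‖ / 2) * Real.cos (w.arg / 2) := by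
    rw [hs_def, Complex.exp_re, hmul_re, hmul_im]
  have hsim : s.im = Real.exp (Real.log ‖w‖ / 2) * Real.sin (w.arg / 2) := by
    rw [hs_def, Complex.exp_im, hmul_re, hmul_im]
  have hpi := Real.pi_pos
  have ha : 0 < s.re := by
    rw [hsre]
    apply mul_pos (Real.exp_pos _)
    apply Real.cos_pos_of_mem_Ioo
    constructor <;> [linarith; linarith]
  have hb : 0 ≤ s.im := by
    rw [hsim]
    apply mul_nonneg (Real.exp_pos _).le
    apply Real.sin_nonneg_of_nonneg_of_le_pi <;> linarith
  have hsq : s ^ 2 = w := by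
    have h2 := Complex.cpow_nat_inv_pow w (two_ne_zero)
    rw [hs]
    convert h2 using 3
    norm_num
  have hsq_re : s.re ^ 2 - s.im ^ 2 = w.re := by
    have h3 := congrArg Complex.re hsq
    simp [pow_two, Complex.mul_re] at h3
    linear_combination h3
  have hsq_im : 2 * s.re * s.im = w.im := by
    have h3 := congrArg Complex.im hsq
    simp [pow_two, Complex.mul_im] at h3
    linear_combination h3
  have hkey : 0 ≤ (u ^ 2 * s).im := by
    have h1 : N * (s.re ^ 2 - s.im ^ 2) = N - x := by
      rw [hsq_re, hwre]; field_simp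
    have h2 : 2 * s.re * s.im * N = t * y := by
      rw [hsq_im, hwim]; field_simp
    have hk := key_ineq x (t * y) s.re s.im N hx hY ha hb hNsq h1 h2
    have hu2re : (u ^ 2).re = x ^ 2 - (t * y) ^ 2 := by
      rw [pow_two, Complex.mul_re, hure, huim]; ring
    have hu2im : (u ^ 2).im = 2 * x * (t * y) := by
      rw [pow_two, Complex.mul_im, hure, huim]; ring
    have him : (u ^ 2 * s).im = (x ^ 2 - (t * y) ^ 2) * s.im + 2 * x * (t * y) * s.re := by
      rw [Complex.mul_im, hu2re, hu2im]
    rw [him]; linarith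
  rw [one_div, Complex.inv_im]
  exact div_nonpos_of_nonpos_of_nonneg (by linarith) (Complex.normSq_nonneg _)
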